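/- Let W be an N×n real matrix (N ≥ 2, n ≥ N) with columns x₁, …, xₙ satisfying W·Wᵗ = ρ·I_N + σ·u·uᵗ and ∑ₗ xₗ = √(n(σ+ρ))·u, where u ∈ ℝᴺ is a unit vector, ρ > 0 and ρ + σ > 0. Define zₗ = xₗ₁ + i·xₗ₂ ∈ ℂ (the projection onto the first two coordinates). Then (σ/(n(σ+ρ)))·(∑ₗ zₗ)² = ∑ₗ zₗ². -/

import Mathlib

open Matrix

theorem stmt7 (N n : ℕ) (hN : 2 ≤ N) (hn : N ≤ n)
    (W : Matrix (Fin N) (Fin n) ℝ) (ρ σ : ℝ) (hρ : 0 < ρ) (hρσ : 0 < ρ + σ)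
    (u : Fin N → ℝ) (hu : ∑ j, u j ^ 2 = 1)
    (hW : W * Wᵀ = ρ • (1 : Matrix (Fin N) (Fin N) ℝ) + σ • Matrix.vecMulVec u u)
    (hsum : ∀ j, ∑ l, W j l = Real.sqrt (n * (σ + ρ)) * u j)
    (z : Fin n → ℂ)
    (hz : ∀ l, z l = ((W ⟨0, by omega⟩ l : ℝ) : ℂ)
        + Complex.I * ((W ⟨1, by omega⟩ l : ℝ) : ℂ)) :
    ((σ / (n * (σ + ρ)) : ℝ) : ℂ) * (∑ l, z l) ^ 2 = ∑ l, (z l) ^ 2 := by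
  set i0 : Fin N := ⟨0, by omega⟩
  set i1 : Fin N := ⟨1, by omega⟩
  set s : ℝ := Real.sqrt (n * (σ + ρ))
  have hne : i0 ≠ i1 := by simp [i0, i1, Fin.ext_iff]
  have hn0 : 0 < n := by omega
  have hn0' : (0:ℝ) < n := by exact_mod_cast hn0
  have hsρ : (0:ℝ) < σ + ρ := by linarith
  have hnn : (0:ℝ) ≤ n * (σ + ρ) := le_of_lt (mul_pos hn0' hsρ)
  have hs2 : s ^ 2 = n * (σ + ρ) := Real.sq_sqrt hnn
  have hE : ∀ j k : Fin N, ∑ l, W j l * W k l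
      = ρ * (if j = k then 1 else 0) + σ * (u j * u k) := by
    intro j k
    have := congrFun (congrFun hW j) k
    simpa [Matrix.mul_apply, Matrix.vecMulVec_apply, Matrix.one_apply,
      Matrix.transpose_apply] using this
  have E1 := hE i0 i0
  have E2 := hE i1 i1
  have E3 := hE i0 i1
  rw [if_pos rfl] at E1 E2
  rw [if_neg hne] at E3
  have hsum0 := hsum i0
  have hsum1 := hsum i1
  have hz2 : ∑ l, (z l) ^ 2
      = ((∑ l, W i0 l * W i0 l : ℝ) : ℂ) - ((∑ l, W i1 l * W i1 l : ℝ) : ℂ)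
        + Complex.I * (2 * ((∑ l, W i0 l * W i1 l : ℝ) : ℂ)) := by
    push_cast
    rw [← Finset.sum_sub_distrib, Finset.mul_sum, Finset.mul_sum, ← Finset.sum_add_distrib]
    refine Finset.sum_congr rfl fun l _ => ?_
    rw [hz l]
    linear_combination ((W i1 l : ℂ))^2 * Complex.I_sq
  have hzsum : ∑ l, z l = ((s * u i0 : ℝ) : ℂ) + Complex.I * ((s * u i1 : ℝ) : ℂ) := by
    rw [← hsum0, ← hsum1]
    push_cast
    rw [Finset.mul_sum, ← Finset.sum_add_distrib]
    exact Finset.sum_congr rfl fun l _ => hz l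
  rw [hz2, hzsum, E1, E2, E3]
  have hnz : ((n : ℂ) * ((σ:ℂ) + ρ)) ≠ 0 := by
    have h : (n:ℝ) * (σ + ρ) ≠ 0 := ne_of_gt (mul_pos hn0' hsρ)
    exact_mod_cast h
  have hs2' : (s:ℂ)^2 = (n:ℂ) * ((σ:ℂ) + ρ) := by exact_mod_cast hs2
  have key : (σ:ℂ)/((n:ℂ)*((σ:ℂ)+ρ)) * (s:ℂ)^2 = (σ:ℂ) := by
    rw [hs2']; exact div_mul_cancel₀ _ hnz
  push_cast
  linear_combination ((u i0:ℂ) + Complex.I*(u i1:ℂ))^2 * key + (σ:ℂ)*(u i1:ℂ)^2 * Complex.I_sq
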